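/- For a symmetric friend-oriented hedonic game, k = 1, and any partition π that is CIS-robust under deletion of a single player: if j is the unique friend of player i, and all neighbors of j in the friendship graph except possibly one are leaves (j is a pseudo-center), then π(i) = {i, j}. -/

import Mathlib

open Finset

section HedonicDefs

variable {α : Type*} [DecidableEq α] [Fintype α]

/-- Additive utility of player `i` in coalition `S`. -/
def util (w : α → α → ℤ) (S : Finset α) (i : α) : ℤ := ∑ j ∈ S, w i j

/-- `π` is a partition of the player set `V`: every player of `V` lies in its own
coalition, coalitions are contained in `V`, and membership determines the coalition. -/
def IsPartition (V : Finset α) (π : α → Finset α) : Prop :=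
  (∀ i ∈ V, i ∈ π i ∧ π i ⊆ V) ∧ ∀ i ∈ V, ∀ j ∈ π i, π j = π i

/-- `S` is a coalition of the partition `π` on `V`, or the empty coalition. -/
def IsCoalitionOf (V : Finset α) (π : α → Finset α) (S : Finset α) : Prop :=
  S = ∅ ∨ ∃ j ∈ V, S = π j

/-- Player `i` has an NS-deviation from `π i` to `S`. -/
def NSDev (w : α → α → ℤ) (V : Finset α) (π : α → Finset α) (i : α) (S : Finset α) : Prop :=
  IsCoalitionOf V π S ∧ S ≠ π i ∧ i ∉ S ∧ util w (π i) i < util w (insert i S) i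

/-- Player `i` has an IS-deviation from `π i` to `S`: an NS-deviation accepted by
all members of the target coalition `S`. -/
def ISDev (w : α → α → ℤ) (V : Finset α) (π : α → Finset α) (i : α) (S : Finset α) : Prop :=
  NSDev w V π i S ∧ ∀ j ∈ S, util w S j ≤ util w (insert i S) j

/-- Player `i` has a CIS-deviation from `π i` to `S`: an IS-deviation also accepted by
all members of the abandoned coalition. -/
def CISDev (w : α → α → ℤ) (V : Finset α) (π : α → Finset α) (i : α) (S : Finset α) : Prop :=
  ISDev w V π i S ∧ ∀ j ∈ (π i).erase i, util w (π i) j ≤ util w ((π i).erase i) j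

def NashStable (w : α → α → ℤ) (V : Finset α) (π : α → Finset α) : Prop :=
  ∀ i ∈ V, ∀ S : Finset α, ¬ NSDev w V π i S

def IndStable (w : α → α → ℤ) (V : Finset α) (π : α → Finset α) : Prop :=
  ∀ i ∈ V, ∀ S : Finset α, ¬ ISDev w V π i S

def CIStable (w : α → α → ℤ) (V : Finset α) (π : α → Finset α) : Prop :=
  ∀ i ∈ V, ∀ S : Finset α, ¬ CISDev w V π i S

/-- Individual rationality: each player weakly prefers its coalition to being alone
(being alone gives utility `w i i = 0`). -/
def IndRational (w : α → α → ℤ) (V : Finset α) (π : α → Finset α) : Prop :=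
  ∀ i ∈ V, 0 ≤ util w (π i) i

/-- Core stability: no nonempty coalition strongly blocks `π`. -/
def CoreStable (w : α → α → ℤ) (V : Finset α) (π : α → Finset α) : Prop :=
  ¬ ∃ S : Finset α, S ⊆ V ∧ S.Nonempty ∧ ∀ i ∈ S, util w (π i) i < util w S i

/-- `π` is robust for the stability notion `St` under deletion of at most `k` players:
`π` satisfies `St` and so does its truncation after removing any `X` with `|X| ≤ k`. -/
def Robust (St : Finset α → (α → Finset α) → Prop) (V : Finset α)
    (π : α → Finset α) (k : ℕ) : Prop :=
  St V π ∧ ∀ X ⊆ V, X.card ≤ k → St (V \ X) (fun i => π i \ X)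

/-- Symmetric friend-oriented game: symmetric weights, zero on the diagonal, and each
off-diagonal weight equals `n` (friends) or `-1` (enemies), where `n` is the number of players. -/
def FriendOriented (w : α → α → ℤ) : Prop :=
  (∀ i j : α, w i j = w j i) ∧ (∀ i : α, w i i = 0) ∧
    ∀ i j : α, i ≠ j → w i j = (Fintype.card α : ℤ) ∨ w i j = -1

/-- `j` is a friend of `i`. -/
def Friend (w : α → α → ℤ) (i j : α) : Prop := i ≠ j ∧ 0 < w i j


instance (w : α → α → ℤ) (i j : α) : Decidable (Friend w i j) :=
  inferInstanceAs (Decidable (_ ∧ _))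

/-- `S` is a clique of the friendship graph. -/
def IsClique (w : α → α → ℤ) (S : Finset α) : Prop :=
  ∀ i ∈ S, ∀ j ∈ S, i ≠ j → Friend w i j

/-- Two players lie in the same connected component of the friendship graph. -/
def SameComp (w : α → α → ℤ) : α → α → Prop :=
  Relation.ReflTransGen (fun a b => Friend w a b)

/-- The connected component of `v` in the friendship graph, as a set. -/
def comp (w : α → α → ℤ) (v : α) : Set α := {u | SameComp w v u}

end HedonicDefs
/-- `v` is a leaf of the friendship graph: it has exactly one friend. -/
def IsLeaf {α : Type*} [DecidableEq α] [Fintype α] (w : α → α → ℤ) (v : α) : Prop :=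
  ∃! u : α, Friend w v u

/-- `j` is a pseudo-center: at most one neighbor of `j` is a non-leaf. -/
def PseudoCenter {α : Type*} [DecidableEq α] [Fintype α] (w : α → α → ℤ) (j : α) : Prop :=
  ∀ u u' : α, Friend w j u → ¬ IsLeaf w u → Friend w j u' → ¬ IsLeaf w u' → u = u'

section AuxLemmas

variable {α : Type*} [DecidableEq α] [Fintype α]

lemma friend_symm {w : α → α → ℤ} (hw : FriendOriented w) {a b : α}
    (h : Friend w a b) : Friend w b a :=
  ⟨h.1.symm, hw.1 a b ▸ h.2⟩

lemma enemy_val {w : α → α → ℤ} (hw : FriendOriented w) {a b : α}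
    (hne : a ≠ b) (h : ¬ Friend w a b) : w a b = -1 := by
  rcases hw.2.2 a b hne with h' | h'
  · have hpos : (0 : ℤ) < (Fintype.card α : ℤ) := by
      have : Nonempty α := ⟨a⟩
      exact_mod_cast Fintype.card_pos
    exact absurd ⟨hne, by rw [h']; exact hpos⟩ h
  · exact h'

lemma util_erase {w : α → α → ℤ} {S : Finset α} {a : α} (b : α) (h : a ∈ S) :
    util w (S.erase a) b = util w S b - w b a :=
  Finset.sum_erase_eq_sub h

lemma util_no_friend {w : α → α → ℤ} (hw : FriendOriented w) {S : Finset α} {a : α}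
    (ha : a ∈ S) (hno : ∀ z ∈ S, z ≠ a → ¬ Friend w a z) :
    util w S a = 1 - S.card := by
  have h1 : util w S a = w a a + ∑ z ∈ S.erase a, w a z :=
    (Finset.add_sum_erase S _ ha).symm
  have h2 : ∑ z ∈ S.erase a, w a z = ∑ _z ∈ S.erase a, (-1 : ℤ) := by
    refine Finset.sum_congr rfl fun z hz => ?_
    have hz' := Finset.mem_erase.mp hz
    exact enemy_val hw (Ne.symm hz'.1) (hno z hz'.2 hz'.1)
  have hc : 1 ≤ S.card := Finset.card_pos.mpr ⟨a, ha⟩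
  rw [h1, h2, hw.2.1, Finset.sum_const, Finset.card_erase_of_mem ha, nsmul_eq_mul]
  push_cast [hc]
  ring

/-- A player whose coalition contains someone else but no friends has a
CIS-deviation to the empty coalition. -/
lemma dev_empty {w : α → α → ℤ} (hw : FriendOriented w) {V : Finset α} {π : α → Finset α}
    (hCIS : CIStable w V π) {a : α} (ha : a ∈ V) (hmem : a ∈ π a)
    {b : α} (hb : b ∈ π a) (hba : b ≠ a)
    (hno : ∀ z ∈ π a, z ≠ a → ¬ Friend w a z) : False := by
  apply hCIS a ha ∅
  have hcard : 1 < (π a).card := Finset.one_lt_card.mpr ⟨a, hmem, b, hb, Ne.symm hba⟩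
  refine ⟨⟨⟨Or.inl rfl, ?_, Finset.notMem_empty a, ?_⟩, ?_⟩, ?_⟩
  · intro h; rw [← h] at hmem; exact Finset.notMem_empty a hmem
  · rw [util_no_friend hw hmem hno]
    have h0 : util w (insert a ∅) a = 0 := by simp [util, hw.2.1]
    rw [h0]
    have : (1 : ℤ) < (π a).card := by exact_mod_cast hcard
    linarith
  · intro z hz; exact absurd hz (Finset.notMem_empty z)
  · intro z hz
    obtain ⟨hza, hzmem⟩ := Finset.mem_erase.mp hz
    rw [util_erase z hmem]
    have hwz : w z a = -1 := by
      rw [hw.1]; exact enemy_val hw (Ne.symm hza) (hno z hzmem hza)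
    rw [hwz]; linarith

/-- A player with no friends in its own coalition whose friend `b` is alone has a
CIS-deviation to `{b}`. -/
lemma dev_join {w : α → α → ℤ} (hw : FriendOriented w) {V : Finset α} {π : α → Finset α}
    (hCIS : CIStable w V π) {a b : α} (ha : a ∈ V) (hb : b ∈ V)
    (hmema : a ∈ π a) (hπb : π b = {b}) (hab : Friend w a b)
    (hno : ∀ z ∈ π a, z ≠ a → ¬ Friend w a z) : False := by
  apply hCIS a ha {b}
  have hne : a ≠ b := hab.1
  have hains : a ∉ ({b} : Finset α) := by simpa using hne
  refine ⟨⟨⟨Or.inr ⟨b, hb, hπb.symm⟩, ?_, hains, ?_⟩, ?_⟩, ?_⟩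
  · intro h; rw [← h] at hmema; exact hne (Finset.mem_singleton.mp hmema)
  · rw [util_no_friend hw hmema hno]
    have h2 : util w (insert a {b}) a = w a b := by
      rw [util, Finset.sum_insert hains]
      simp [hw.2.1]
    rw [h2]
    have hpos : (0 : ℤ) < w a b := hab.2
    have hc : 1 ≤ (π a).card := Finset.card_pos.mpr ⟨a, hmema⟩
    have : (1 : ℤ) ≤ (π a).card := by exact_mod_cast hc
    linarith
  · intro z hz
    rw [Finset.mem_singleton.mp hz]
    have h3 : util w (insert a {b}) b = w b a := by
      rw [util, Finset.sum_insert hains]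
      simp [hw.2.1]
    have h4 : util w ({b} : Finset α) b = 0 := by simp [util, hw.2.1]
    rw [h3, h4, ← hw.1]
    exact le_of_lt hab.2
  · intro z hz
    obtain ⟨hza, hzmem⟩ := Finset.mem_erase.mp hz
    rw [util_erase z hmema]
    have hwz : w z a = -1 := by
      rw [hw.1]; exact enemy_val hw (Ne.symm hza) (hno z hzmem hza)
    rw [hwz]; linarith

end AuxLemmas

/-- For `k = 1` and a CIS-robust partition `π`, if `j` is the unique friend
of `i` and `j` is a pseudo-center of the friendship graph, then `π i = {i, j}`. -/
theorem cis_robust_pair {α : Type*} [DecidableEq α] [Fintype α]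
    (w : α → α → ℤ) (hw : FriendOriented w) (π : α → Finset α)
    (hπ : IsPartition (Finset.univ : Finset α) π)
    (hrob : Robust (CIStable w) Finset.univ π 1)
    (i j : α) (hfriend : Friend w i j) (huniq : ∀ l : α, Friend w i l → l = j)
    (hpc : PseudoCenter w j) :
    π i = {i, j} := by
  obtain ⟨hCIS, hrob1⟩ := hrob
  have hij_ne : i ≠ j := hfriend.1
  have hmem : ∀ a : α, a ∈ π a := fun a => (hπ.1 a (Finset.mem_univ a)).1
  have hpart : ∀ a b : α, b ∈ π a → π b = π a := fun a b => hπ.2 a (Finset.mem_univ a) b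
  have htrunc : ∀ x : α, CIStable w (Finset.univ \ {x}) (fun i => π i \ {x}) := fun x =>
    hrob1 {x} (Finset.subset_univ _) (by simp)
  -- Step A: j ∈ π i
  have hjmem : j ∈ π i := by
    by_contra hj
    have hnoi : ∀ z ∈ π i, z ≠ i → ¬ Friend w i z := by
      intro z hz _ hf
      exact hj ((huniq z hf) ▸ hz)
    have hpii : π i = {i} := by
      apply Finset.eq_singleton_iff_unique_mem.mpr
      refine ⟨hmem i, fun x hx => ?_⟩
      by_contra hxi
      exact dev_empty hw hCIS (Finset.mem_univ i) (hmem i) hx hxi hnoi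
    have hiT : i ∉ π j := by
      intro h
      have hpij : π i = π j := hpart j i h
      have hj' := hmem j
      rw [← hpij, hpii] at hj'
      exact hij_ne (Finset.mem_singleton.mp hj').symm
    by_cases hF : ∃ y ∈ π j, Friend w j y
    · obtain ⟨y, hyT, hjy⟩ := hF
      by_cases hF2 : ∃ y' ∈ π j, Friend w j y' ∧ y' ≠ y
      · -- j has two friends in its coalition: one of them is a leaf
        obtain ⟨y', hy'T, hjy', hy'y⟩ := hF2
        have hleaf : ∃ y0, y0 ∈ π j ∧ Friend w j y0 ∧ IsLeaf w y0 ∧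
            ∃ b ∈ π j, b ≠ y0 ∧ b ≠ j := by
          by_cases hly : IsLeaf w y
          · exact ⟨y, hyT, hjy, hly, y', hy'T, hy'y, hjy'.1.symm⟩
          · have hly' : IsLeaf w y' := by
              by_contra hly'
              exact hy'y (hpc y' y hjy' hly' hjy hly)
            exact ⟨y', hy'T, hjy', hly', y, hyT, Ne.symm hy'y, hjy.1.symm⟩
        obtain ⟨y0, hy0T, hjy0, hly0, b, hbT, hby0, hbj⟩ := hleaf
        have huy0 : ∀ u, Friend w y0 u → u = j := by
          obtain ⟨u, _, huu⟩ := hly0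
          intro v hv
          rw [huu v hv, huu j (friend_symm hw hjy0)]
        have hπy0 : π y0 = π j := hpart j y0 hy0T
        have hy0j : y0 ≠ j := hjy0.1.symm
        refine dev_empty hw (htrunc j) (a := y0) (b := b) ?_ ?_ ?_ hby0 ?_
        · simp [hy0j]
        · exact Finset.mem_sdiff.mpr ⟨by rw [hπy0]; exact hy0T, by simp [hy0j]⟩
        · exact Finset.mem_sdiff.mpr ⟨by rw [hπy0]; exact hbT, by simp [hbj]⟩
        · intro z hz hzy0 hf
          exact (Finset.mem_sdiff.mp hz).2 (by simp [huy0 z hf])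
      · -- y is the unique friend of j in π j : delete y, j joins {i}
        push_neg at hF2
        have hjyne : j ≠ y := hjy.1
        have hiy : i ≠ y := fun h => hiT (h ▸ hyT)
        refine dev_join hw (htrunc y) (a := j) (b := i) ?_ ?_ ?_ ?_
          (friend_symm hw hfriend) ?_
        · simp [hjyne]
        · simp [hiy]
        · exact Finset.mem_sdiff.mpr ⟨hmem j, by simp [hjyne]⟩
        · rw [hpii]
          rw [Finset.sdiff_eq_self_iff_disjoint]
          simp [Ne.symm hiy, hiy]
        · intro z hz hzj hf
          obtain ⟨hzT, hzy⟩ := Finset.mem_sdiff.mp hz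
          exact (by simpa using hzy : z ≠ y) (hF2 z hzT hf)
    · push_neg at hF
      by_cases hTj : ∃ b ∈ π j, b ≠ j
      · obtain ⟨b, hb, hbj⟩ := hTj
        exact dev_empty hw hCIS (Finset.mem_univ j) (hmem j) hb hbj
          (fun z hz _ => hF z hz)
      · push_neg at hTj
        have hπj : π j = {j} := Finset.eq_singleton_iff_unique_mem.mpr ⟨hmem j, hTj⟩
        exact dev_join hw hCIS (Finset.mem_univ i) (Finset.mem_univ j) (hmem i)
          hπj hfriend hnoi
  -- Step B: π i = {i, j}
  apply Finset.Subset.antisymm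
  · intro x hx
    simp only [Finset.mem_insert, Finset.mem_singleton]
    by_contra hxc
    push_neg at hxc
    obtain ⟨hxi, hxj⟩ := hxc
    refine dev_empty hw (htrunc j) (a := i) (b := x) ?_ ?_ ?_ hxi ?_
    · simp [hij_ne]
    · exact Finset.mem_sdiff.mpr ⟨hmem i, by simp [hij_ne]⟩
    · exact Finset.mem_sdiff.mpr ⟨hx, by simp [hxj]⟩
    · intro z hz _ hf
      exact (Finset.mem_sdiff.mp hz).2 (by simp [huniq z hf])
  · intro x hx
    rcases Finset.mem_insert.mp hx with h | h
    · exact h ▸ hmem i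
    · exact (Finset.mem_singleton.mp h) ▸ hjmem
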